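/- A sequence (ηⁿ)_{n∈ℕ} ⊆ 𝒮 is a Cauchy sequence in (𝒮, d_𝒮) if and only if all four of the following hold: (i) for each x ∈ L⁻¹ℤ, the sequence (ηⁿ(x))_{n∈ℕ} is a Cauchy sequence in ℓ¹, i.e. ∑_{k=0}^∞ |ηⁿ_k(x) − η^m_k(x)| → 0 as n, m → ∞; (ii) sup_{n∈ℕ} |||ηⁿ|||_𝒮 < ∞; (iii) for every ε > 0 there exists R > 0 such that sup_{n∈ℕ} ∑_{x∈L⁻¹ℤ, |x|≥R} ‖ηⁿ(x)‖_{ℓ¹}/(1+|x|)² ≤ ε; (iv) for each x ∈ L⁻¹ℤ there exists J ∈ ℕ₀ such that ηⁿ_k(x) = 0 for all k ≥ J and all n ∈ ℕ. -/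

import Mathlib

open scoped ENNReal NNReal BigOperators

namespace SpatialMuller

/-- Configurations: `ξ n k` is the number of particles carrying `k` mutations
living at the deme with position `n / L`. -/
abbrev Config : Type := ℤ → ℕ → ℕ

/-- The real position `n / L` of the deme indexed by `n : ℤ`. -/
noncomputable def pos (L : ℝ) (n : ℤ) : ℝ := (n : ℝ) / L

/-- The weight `(1 + |x|) ^ 2` at the deme indexed by `n`, as an extended real. -/
noncomputable def w (L : ℝ) (n : ℤ) : ℝ≥0∞ := ENNReal.ofReal ((1 + |pos L n|) ^ 2)

lemma w_ne_zero (L : ℝ) (n : ℤ) : w L n ≠ 0 := by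
  have h : (0 : ℝ) < (1 + |pos L n|) ^ 2 := by positivity
  simp only [w, ne_eq, ENNReal.ofReal_eq_zero, not_le]
  exact h

lemma w_ne_top (L : ℝ) (n : ℤ) : w L n ≠ ∞ := ENNReal.ofReal_ne_top

/-- `‖ξ(x)‖_{ℓ¹} ∈ [0,∞]`: the total number of particles at the deme indexed by `n`. -/
noncomputable def cellMass (ξ : Config) (n : ℤ) : ℝ≥0∞ := ∑' k : ℕ, (ξ n k : ℝ≥0∞)

/-- `|||ξ|||_𝒮`: the total weighted mass of the configuration `ξ`. -/
noncomputable def tmass (L : ℝ) (ξ : Config) : ℝ≥0∞ := ∑' n : ℤ, cellMass ξ n / w L n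

/-- The `ℓ¹` distance between the contents of the deme indexed by `n`. -/
noncomputable def cellDist (ξ ζ : Config) (n : ℤ) : ℝ≥0∞ :=
  ∑' k : ℕ, (((ξ n k : ℤ) - (ζ n k : ℤ)).natAbs : ℝ≥0∞)

/-- The metric `d_𝒮`, with values in `[0,∞]`. -/
noncomputable def dS (L : ℝ) (ξ ζ : Config) : ℝ≥0∞ := ∑' n : ℤ, cellDist ξ ζ n / w L n

/-- The state space `𝒮` of configurations with finite total weighted mass. -/
def SpaceS (L : ℝ) : Type := {ξ : Config // tmass L ξ ≠ ∞}


lemma one_le_w (L : ℝ) (n : ℤ) : 1 ≤ w L n := by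
  rw [w, ← ENNReal.ofReal_one]
  exact ENNReal.ofReal_le_ofReal (by nlinarith [abs_nonneg (pos L n)])

lemma cellDist_le_add (ξ ζ : Config) (n : ℤ) :
    cellDist ξ ζ n ≤ cellMass ξ n + cellMass ζ n := by
  rw [cellMass, cellMass, ← ENNReal.tsum_add]
  refine ENNReal.tsum_le_tsum fun k => ?_
  have h : ((ξ n k : ℤ) - (ζ n k : ℤ)).natAbs ≤ ξ n k + ζ n k := by omega
  exact_mod_cast h

lemma cellMass_le (ξ ζ : Config) (n : ℤ) :
    cellMass ξ n ≤ cellMass ζ n + cellDist ξ ζ n := by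
  rw [cellMass, cellMass, cellDist, ← ENNReal.tsum_add]
  refine ENNReal.tsum_le_tsum fun k => ?_
  have h : ξ n k ≤ ζ n k + ((ξ n k : ℤ) - (ζ n k : ℤ)).natAbs := by omega
  exact_mod_cast h

lemma tmass_le (L : ℝ) (ξ ζ : Config) : tmass L ξ ≤ tmass L ζ + dS L ξ ζ := by
  rw [tmass, tmass, dS, ← ENNReal.tsum_add]
  refine ENNReal.tsum_le_tsum fun n => ?_
  rw [← ENNReal.add_div]
  exact ENNReal.div_le_div_right (cellMass_le ξ ζ n) _

lemma cellMass_ne_top (L : ℝ) (ξ : Config) (hξ : tmass L ξ ≠ ∞) (n : ℤ) :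
    cellMass ξ n ≠ ∞ := by
  have h1 : cellMass ξ n / w L n ≤ tmass L ξ := ENNReal.le_tsum n
  have h2 : cellMass ξ n / w L n ≠ ∞ := ne_top_of_le_ne_top hξ h1
  have h3 := ENNReal.mul_ne_top h2 (w_ne_top L n)
  rwa [ENNReal.div_mul_cancel (w_ne_zero L n) (w_ne_top L n)] at h3

lemma finite_support (a : ℕ → ℕ) (h : (∑' k, (a k : ℝ≥0∞)) ≠ ∞) :
    ∃ J : ℕ, ∀ k, J ≤ k → a k = 0 := by
  have hs : Summable (fun k => (a k : ℝ≥0)) := by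
    rw [← ENNReal.tsum_coe_ne_top_iff_summable]
    simpa using h
  have hs' : Summable (fun k => ((a k : ℝ≥0) : ℝ)) := NNReal.summable_coe.mpr hs
  have hev : ∀ᶠ k in Filter.atTop, ((a k : ℝ≥0) : ℝ) < 1 :=
    hs'.tendsto_atTop_zero.eventually_lt_const one_pos
  rw [Filter.eventually_atTop] at hev
  obtain ⟨J, hJ⟩ := hev
  exact ⟨J, fun k hk => by have := hJ k hk; exact_mod_cast Nat.lt_one_iff.mp (by exact_mod_cast this)⟩

lemma tail_small (L : ℝ) (f : ℤ → ℝ≥0∞) (hf : (∑' n, f n) ≠ ∞) (ε : ℝ≥0∞) (hε : 0 < ε) :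
    ∃ R : ℝ, 0 < R ∧ (∑' x : ℤ, if R ≤ |pos L x| then f x else 0) ≤ ε := by
  have ht := ENNReal.tendsto_tsum_compl_atTop_zero (f := f) hf
  have hev := ht.eventually_lt_const hε
  obtain ⟨s, hs⟩ := hev.exists
  refine ⟨1 + ∑ x ∈ s, |pos L x|, by positivity, ?_⟩
  have hle : ∀ x : ℤ, (if (1 + ∑ y ∈ s, |pos L y|) ≤ |pos L x| then f x else 0) ≤
      Set.indicator {x : ℤ | x ∉ s} f x := by
    intro x
    split_ifs with h
    · have hxs : x ∉ s := by
        intro hx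
        have h1 : |pos L x| ≤ ∑ y ∈ s, |pos L y| :=
          Finset.single_le_sum (f := fun y => |pos L y|) (fun y _ => abs_nonneg _) hx
        linarith
      exact (Set.indicator_of_mem (show x ∈ {x : ℤ | x ∉ s} from hxs) f).ge
    · exact zero_le'
  calc (∑' x : ℤ, if (1 + ∑ y ∈ s, |pos L y|) ≤ |pos L x| then f x else 0)
      ≤ ∑' x : ℤ, Set.indicator {x : ℤ | x ∉ s} f x := ENNReal.tsum_le_tsum hle
    _ = ∑' x : {x : ℤ | x ∉ s}, f x := (tsum_subtype _ f).symm
    _ ≤ ε := le_of_lt hs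
/-- A sequence `(ηⁿ) ⊆ 𝒮` is Cauchy for `d_𝒮` if and only if:
(i) for each deme `x` the sequence `(ηⁿ(x))` is Cauchy in `ℓ¹`;
(ii) `sup_n |||ηⁿ|||_𝒮 < ∞`;
(iii) for every `ε > 0` there is `R > 0` with
`sup_n ∑_{|x|≥R} ‖ηⁿ(x)‖_{ℓ¹}/(1+|x|)² ≤ ε`;
(iv) for each deme `x` there is `J` with `ηⁿ_k(x) = 0` for all `k ≥ J` and all `n`. -/
theorem statement3 (L : ℝ) (hL : 0 < L) (η : ℕ → SpaceS L) :
    (∀ ε : ℝ, 0 < ε → ∃ N : ℕ, ∀ i j : ℕ, N ≤ i → N ≤ j →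
        dS L (η i).1 (η j).1 < ENNReal.ofReal ε) ↔
      ((∀ x : ℤ, ∀ ε : ℝ, 0 < ε → ∃ N : ℕ, ∀ i j : ℕ, N ≤ i → N ≤ j →
          cellDist (η i).1 (η j).1 x < ENNReal.ofReal ε) ∧
        (⨆ n : ℕ, tmass L (η n).1) ≠ ∞ ∧
        (∀ ε : ℝ, 0 < ε → ∃ R : ℝ, 0 < R ∧ ∀ n : ℕ,
          (∑' x : ℤ, if R ≤ |pos L x| then cellMass (η n).1 x / w L x else 0) ≤
            ENNReal.ofReal ε) ∧
        (∀ x : ℤ, ∃ J : ℕ, ∀ n : ℕ, ∀ k : ℕ, J ≤ k → (η n).1 x k = 0)) := by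
  constructor
  · intro hC
    have hi : ∀ x : ℤ, ∀ ε : ℝ, 0 < ε → ∃ N : ℕ, ∀ i j : ℕ, N ≤ i → N ≤ j →
        cellDist (η i).1 (η j).1 x < ENNReal.ofReal ε := by
      intro x ε hε
      have hc0 : (0:ℝ) < (1 + |pos L x|) ^ 2 := by positivity
      obtain ⟨N, hN⟩ := hC (ε / (1 + |pos L x|) ^ 2) (by positivity)
      refine ⟨N, fun i j hij hj => ?_⟩
      have h1 : cellDist (η i).1 (η j).1 x / w L x ≤ dS L (η i).1 (η j).1 :=
        ENNReal.le_tsum x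
      have h2 := lt_of_le_of_lt h1 (hN i j hij hj)
      have h3 := (ENNReal.mul_lt_mul_iff_left (w_ne_zero L x) (w_ne_top L x)).mpr h2
      rwa [ENNReal.div_mul_cancel (w_ne_zero L x) (w_ne_top L x), w,
        ← ENNReal.ofReal_mul (by positivity),
        div_mul_cancel₀ _ (ne_of_gt hc0)] at h3
    refine ⟨hi, ?_, ?_, ?_⟩
    · -- (ii) bounded total mass
      obtain ⟨N, hN⟩ := hC 1 one_pos
      have hSne : (∑ m ∈ Finset.range (N + 1), tmass L (η m).1) + 1 ≠ ∞ := by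
        refine ENNReal.add_ne_top.mpr ⟨?_, ENNReal.one_ne_top⟩
        exact (ENNReal.sum_lt_top.mpr fun m _ => (η m).2.lt_top).ne
      refine ne_top_of_le_ne_top hSne (iSup_le fun n => ?_)
      rcases le_total n N with h | h
      · calc tmass L (η n).1
            ≤ ∑ m ∈ Finset.range (N+1), tmass L (η m).1 :=
              Finset.single_le_sum (f := fun m => tmass L (η m).1)
                (fun m _ => zero_le') (Finset.mem_range.mpr (Nat.lt_succ_of_le h))
          _ ≤ _ := le_self_add
      · calc tmass L (η n).1
            ≤ tmass L (η N).1 + dS L (η n).1 (η N).1 := tmass_le L _ _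
          _ ≤ (∑ m ∈ Finset.range (N+1), tmass L (η m).1) + 1 := by
              refine add_le_add ?_ ?_
              · exact Finset.single_le_sum (f := fun m => tmass L (η m).1)
                  (fun m _ => zero_le') (Finset.mem_range.mpr (Nat.lt_succ_of_le le_rfl))
              · have := (hN n N h le_rfl).le
                rwa [ENNReal.ofReal_one] at this
    · -- (iii) uniform tails
      intro ε hε
      obtain ⟨N, hN⟩ := hC (ε / 2) (by positivity)
      have hRe : ∀ m : ℕ, ∃ R : ℝ, 0 < R ∧
          (∑' x : ℤ, if R ≤ |pos L x| then cellMass (η m).1 x / w L x else 0) ≤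
            ENNReal.ofReal (ε / 2) := by
        intro m
        exact tail_small L _ (η m).2 _ (ENNReal.ofReal_pos.mpr (by positivity))
      choose R hR0 hR using hRe
      have hsum0 : (0:ℝ) ≤ ∑ m ∈ Finset.range (N+1), R m :=
        Finset.sum_nonneg fun m _ => (hR0 m).le
      refine ⟨1 + ∑ m ∈ Finset.range (N+1), R m, by linarith, fun n => ?_⟩
      have hmono : ∀ (m : ℕ) (ξ : Config), m ∈ Finset.range (N+1) →
          (∑' x : ℤ, if (1 + ∑ l ∈ Finset.range (N+1), R l) ≤ |pos L x| then
              cellMass ξ x / w L x else 0) ≤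
          (∑' x : ℤ, if R m ≤ |pos L x| then cellMass ξ x / w L x else 0) := by
        intro m ξ hm
        refine ENNReal.tsum_le_tsum fun x => ?_
        have hRm : R m ≤ 1 + ∑ l ∈ Finset.range (N+1), R l := by
          have := Finset.single_le_sum (f := R) (fun l _ => (hR0 l).le) hm
          linarith
        split_ifs with h1 h2
        · exact le_rfl
        · exact absurd (hRm.trans h1) h2
        · exact zero_le'
        · exact le_rfl
      rcases le_total n N with h | h
      · refine le_trans (hmono n _ (Finset.mem_range.mpr (Nat.lt_succ_of_le h))) ?_
        exact (hR n).trans (ENNReal.ofReal_le_ofReal (by linarith))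
      · have step : (∑' x : ℤ, if (1 + ∑ l ∈ Finset.range (N+1), R l) ≤ |pos L x| then
              cellMass (η n).1 x / w L x else 0)
            ≤ (∑' x : ℤ, if (1 + ∑ l ∈ Finset.range (N+1), R l) ≤ |pos L x| then
              cellMass (η N).1 x / w L x else 0) + dS L (η n).1 (η N).1 := by
          rw [dS, ← ENNReal.tsum_add]
          refine ENNReal.tsum_le_tsum fun x => ?_
          split_ifs with h1
          · rw [← ENNReal.add_div]
            exact ENNReal.div_le_div_right (cellMass_le _ _ x) _
          · exact zero_le'
        refine step.trans ?_
        have hb1 := (hmono N _ (Finset.mem_range.mpr (Nat.lt_succ_of_le le_rfl))).trans (hR N)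
        have hb2 := (hN n N h le_rfl).le
        calc _ ≤ ENNReal.ofReal (ε/2) + ENNReal.ofReal (ε/2) := add_le_add hb1 hb2
          _ = ENNReal.ofReal ε := by
              rw [← ENNReal.ofReal_add (by positivity) (by positivity), add_halves]
    · -- (iv) uniform finite support
      intro x
      obtain ⟨N, hN⟩ := hi x (1/2) (by norm_num)
      have heq : ∀ n, N ≤ n → ∀ k, (η n).1 x k = (η N).1 x k := by
        intro n hn k
        have h2 := hN n N hn le_rfl
        have h3 : ((((η n).1 x k : ℤ) - ((η N).1 x k : ℤ)).natAbs : ℝ≥0∞) ≤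
            cellDist (η n).1 (η N).1 x := ENNReal.le_tsum k
        have h4 : ((((η n).1 x k : ℤ) - ((η N).1 x k : ℤ)).natAbs : ℝ≥0∞) < 1 :=
          lt_of_le_of_lt h3 (h2.trans_le (ENNReal.ofReal_le_one.mpr (by norm_num)))
        have h5 : (((η n).1 x k : ℤ) - ((η N).1 x k : ℤ)).natAbs = 0 := by
          exact_mod_cast Nat.lt_one_iff.mp (by exact_mod_cast h4)
        omega
      have hfin : ∀ m : ℕ, ∃ J : ℕ, ∀ k, J ≤ k → (η m).1 x k = 0 := fun m =>
        finite_support _ (cellMass_ne_top L _ (η m).2 x)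
      choose J hJ using hfin
      refine ⟨∑ m ∈ Finset.range (N+1), J m, fun n k hk => ?_⟩
      rcases le_total n N with h | h
      · exact hJ n k (le_trans (Finset.single_le_sum (f := J)
          (fun l _ => Nat.zero_le _) (Finset.mem_range.mpr (Nat.lt_succ_of_le h))) hk)
      · rw [heq n h k]
        exact hJ N k (le_trans (Finset.single_le_sum (f := J)
          (fun l _ => Nat.zero_le _) (Finset.mem_range.mpr (Nat.lt_succ_of_le le_rfl))) hk)
  · rintro ⟨h1, h2, h3, h4⟩ ε hε
    obtain ⟨R, hR0, hR⟩ := h3 (ε / 4) (by positivity)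
    have hout : ∀ x : ℤ, x ∉ Finset.Icc (-⌈R * L⌉) ⌈R * L⌉ → R ≤ |pos L x| := by
      intro x hx
      rw [Finset.mem_Icc, not_and_or, not_le, not_le] at hx
      have hMx : (⌈R * L⌉ : ℤ) < |x| := by
        rcases hx with hx | hx
        · calc (⌈R * L⌉ : ℤ) < -x := by omega
            _ ≤ |x| := neg_le_abs x
        · exact lt_of_lt_of_le hx (le_abs_self x)
      have hMR : R * L ≤ (⌈R * L⌉ : ℝ) := Int.le_ceil _
      have hMx' : ((⌈R * L⌉ : ℤ) : ℝ) < |(x:ℝ)| := by exact_mod_cast hMx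
      have hpos : |pos L x| = |(x:ℝ)| / L := by rw [pos, abs_div, abs_of_pos hL]
      rw [hpos, le_div_iff₀ hL]
      linarith
    set s : Finset ℤ := Finset.Icc (-⌈R * L⌉) ⌈R * L⌉ with hs
    have hδ : (0:ℝ) < ε / (2 * ((s.card : ℝ) + 1)) := by positivity
    have hNs : ∀ x : ℤ, ∃ N : ℕ, ∀ i j, N ≤ i → N ≤ j →
        cellDist (η i).1 (η j).1 x < ENNReal.ofReal (ε / (2 * ((s.card : ℝ) + 1))) :=
      fun x => h1 x _ hδ
    choose Nf hNf using hNs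
    refine ⟨s.sup Nf, fun i j hij hj => ?_⟩
    have hsplit : dS L (η i).1 (η j).1 ≤
        (∑ x ∈ s, cellDist (η i).1 (η j).1 x / w L x) +
        (∑' x : ℤ, if x ∈ s then 0 else cellDist (η i).1 (η j).1 x / w L x) := by
      rw [dS]
      have hsp : ∀ x : ℤ, cellDist (η i).1 (η j).1 x / w L x =
          (if x ∈ s then cellDist (η i).1 (η j).1 x / w L x else 0) +
          (if x ∈ s then 0 else cellDist (η i).1 (η j).1 x / w L x) := by
        intro x; split_ifs <;> simp
      rw [tsum_congr hsp, ENNReal.tsum_add]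
      refine add_le_add ?_ le_rfl
      rw [tsum_eq_sum (s := s) (fun b hb => if_neg hb)]
      exact le_of_eq (Finset.sum_congr rfl fun x hx => if_pos hx)
    have hfar : (∑' x : ℤ, if x ∈ s then 0 else cellDist (η i).1 (η j).1 x / w L x) ≤
        ENNReal.ofReal (ε / 2) := by
      have hle : ∀ x : ℤ, (if x ∈ s then 0 else cellDist (η i).1 (η j).1 x / w L x) ≤
          (if R ≤ |pos L x| then cellMass (η i).1 x / w L x else 0) +
          (if R ≤ |pos L x| then cellMass (η j).1 x / w L x else 0) := by
        intro x
        by_cases hx : x ∈ s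
        · simp [hx]
        · rw [if_neg hx, if_pos (hout x hx), if_pos (hout x hx), ← ENNReal.add_div]
          exact ENNReal.div_le_div_right (cellDist_le_add _ _ x) _
      calc (∑' x : ℤ, if x ∈ s then 0 else cellDist (η i).1 (η j).1 x / w L x)
          ≤ ∑' x : ℤ, ((if R ≤ |pos L x| then cellMass (η i).1 x / w L x else 0) +
            (if R ≤ |pos L x| then cellMass (η j).1 x / w L x else 0)) :=
            ENNReal.tsum_le_tsum hle
        _ = (∑' x : ℤ, if R ≤ |pos L x| then cellMass (η i).1 x / w L x else 0) +
            (∑' x : ℤ, if R ≤ |pos L x| then cellMass (η j).1 x / w L x else 0) :=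
            ENNReal.tsum_add
        _ ≤ ENNReal.ofReal (ε/4) + ENNReal.ofReal (ε/4) := add_le_add (hR i) (hR j)
        _ = ENNReal.ofReal (ε/2) := by
            rw [← ENNReal.ofReal_add (by positivity) (by positivity)]; congr 1; ring
    have hnear : (∑ x ∈ s, cellDist (η i).1 (η j).1 x / w L x) ≤
        ENNReal.ofReal ((s.card : ℝ) * (ε / (2 * ((s.card : ℝ) + 1)))) := by
      calc (∑ x ∈ s, cellDist (η i).1 (η j).1 x / w L x)
          ≤ ∑ _x ∈ s, ENNReal.ofReal (ε / (2 * ((s.card : ℝ) + 1))) := by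
            refine Finset.sum_le_sum fun x hx => ?_
            have ht : cellDist (η i).1 (η j).1 x / w L x ≤ cellDist (η i).1 (η j).1 x := by
              have := ENNReal.div_le_div (le_refl (cellDist (η i).1 (η j).1 x)) (one_le_w L x)
              rwa [div_one] at this
            exact ht.trans (hNf x i j ((Finset.le_sup hx).trans hij)
              ((Finset.le_sup hx).trans hj)).le
        _ = ENNReal.ofReal ((s.card : ℝ) * (ε / (2 * ((s.card : ℝ) + 1)))) := by
            rw [Finset.sum_const, nsmul_eq_mul, ← ENNReal.ofReal_natCast s.card,
              ← ENNReal.ofReal_mul (Nat.cast_nonneg _)]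
    have hlt : (s.card : ℝ) * (ε / (2 * ((s.card : ℝ) + 1))) + ε / 2 < ε := by
      have hc : (0:ℝ) ≤ (s.card : ℝ) := Nat.cast_nonneg _
      have h5 : (s.card : ℝ) * (ε / (2 * ((s.card : ℝ) + 1))) < ε / 2 := by
        rw [mul_div_assoc', div_lt_div_iff₀ (by positivity) (by norm_num)]
        nlinarith
      linarith
    calc dS L (η i).1 (η j).1 ≤ _ := hsplit
      _ ≤ ENNReal.ofReal ((s.card : ℝ) * (ε / (2 * ((s.card : ℝ) + 1)))) +
          ENNReal.ofReal (ε / 2) := add_le_add hnear hfar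
      _ = ENNReal.ofReal ((s.card : ℝ) * (ε / (2 * ((s.card : ℝ) + 1))) + ε / 2) :=
          (ENNReal.ofReal_add (by positivity) (by positivity)).symm
      _ < ENNReal.ofReal ε := (ENNReal.ofReal_lt_ofReal_iff hε).mpr hlt

end SpatialMuller
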